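/- Fix h > 0 and the uniform grid x_ν = νh with cells I_ν = [x_ν − h/2, x_ν + h/2) for ν ∈ ℤ. Let (v̄_ν)_{ν∈ℤ} be a real sequence with finite total variation V := Σ_{ν∈ℤ} |v̄_{ν+1} − v̄_ν| < ∞, and define the piecewise-linear minmod reconstruction P : ℝ → ℝ by P(x) = v̄_ν + mm(v̄_{ν+1} − v̄_ν, v̄_ν − v̄_{ν−1})·(x − x_ν)/h for x ∈ I_ν. Then the total (pointwise) variation of P over ℝ is at most V. That is, the minmod piecewise-linear reconstruction is Total Variation Diminishing: ‖P‖_BV ≤ Σ_ν |v̄_{ν+1} − v̄_ν|. -/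

import Mathlib

/-- The minmod function `mm(z₁,z₂) = ((sgn z₁ + sgn z₂)/2)·min(|z₁|,|z₂|)`. -/
noncomputable def minmod (z₁ z₂ : ℝ) : ℝ :=
  ((Real.sign z₁ + Real.sign z₂) / 2) * min |z₁| |z₂|

/-- The piecewise-linear minmod reconstruction on the uniform grid `x_ν = νh`,
with cells `I_ν = [x_ν − h/2, x_ν + h/2)`:  for `x ∈ I_ν` (i.e. `ν = ⌊x/h + 1/2⌋`),
`P(x) = v̄_ν + mm(Δ₊v̄_ν, Δ₋v̄_ν)·(x − x_ν)/h`. -/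
noncomputable def minmodReconstruction (h : ℝ) (v : ℤ → ℝ) (x : ℝ) : ℝ :=
  let ν : ℤ := ⌊x / h + 1 / 2⌋
  v ν + minmod (v (ν + 1) - v ν) (v ν - v (ν - 1)) * (x - ν * h) / h

section Aux

lemma sign_le_one' (x : ℝ) : Real.sign x ≤ 1 := by
  rcases lt_trichotomy x 0 with h|h|h
  · rw [Real.sign_of_neg h]; norm_num
  · simp [h, Real.sign_zero]
  · rw [Real.sign_of_pos h]

lemma neg_one_le_sign' (x : ℝ) : -1 ≤ Real.sign x := by
  rcases lt_trichotomy x 0 with h|h|h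
  · rw [Real.sign_of_neg h]
  · norm_num [h, Real.sign_zero]
  · rw [Real.sign_of_pos h]; norm_num

lemma minmod_comm (a b : ℝ) : minmod a b = minmod b a := by
  unfold minmod; rw [add_comm, min_comm]

lemma minmod_le_left {a b : ℝ} (ha : 0 ≤ a) : minmod a b ≤ a := by
  unfold minmod
  have h1 : (Real.sign a + Real.sign b) / 2 ≤ 1 := by
    have := sign_le_one' a; have := sign_le_one' b; linarith
  have h2 : (0:ℝ) ≤ min |a| |b| := le_min (abs_nonneg _) (abs_nonneg _)
  calc (Real.sign a + Real.sign b) / 2 * min |a| |b| ≤ 1 * min |a| |b| :=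
        mul_le_mul_of_nonneg_right h1 h2
    _ = min |a| |b| := one_mul _
    _ ≤ |a| := min_le_left _ _
    _ = a := abs_of_nonneg ha

lemma minmod_nonneg_left {a b : ℝ} (ha : 0 ≤ a) : 0 ≤ minmod a b := by
  rcases eq_or_lt_of_le ha with h|h
  · unfold minmod
    rw [← h, abs_zero, min_eq_left (abs_nonneg b)]
    simp
  · unfold minmod
    have h1 : (0:ℝ) ≤ (Real.sign a + Real.sign b) / 2 := by
      rw [Real.sign_of_pos h]; have := neg_one_le_sign' b; linarith
    exact mul_nonneg h1 (le_min (abs_nonneg _) (abs_nonneg _))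

lemma minmod_le_right {a b : ℝ} (hb : 0 ≤ b) : minmod a b ≤ b := by
  rw [minmod_comm]; exact minmod_le_left hb

lemma minmod_nonneg_right {a b : ℝ} (hb : 0 ≤ b) : 0 ≤ minmod a b := by
  rw [minmod_comm]; exact minmod_nonneg_left hb

lemma minmod_neg (a b : ℝ) : minmod (-a) (-b) = - minmod a b := by
  unfold minmod
  rw [Real.sign_neg, Real.sign_neg, abs_neg, abs_neg]
  ring

lemma evar_neg (f : ℝ → ℝ) (s : Set ℝ) :
    eVariationOn (fun x => -f x) s = eVariationOn f s := by
  simp only [eVariationOn]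
  congr 1; funext p; congr 1; funext i; rw [edist_neg_neg]

lemma P_eq (h : ℝ) (v : ℤ → ℝ) {x : ℝ} {ν : ℤ} (hfl : ⌊x / h + 1 / 2⌋ = ν) :
    minmodReconstruction h v x
      = v ν + minmod (v (ν + 1) - v ν) (v ν - v (ν - 1)) * (x - ν * h) / h := by
  simp only [minmodReconstruction, hfl]

lemma floor1 {h x : ℝ} (hh : 0 < h) {ν : ℤ} (h1 : (ν:ℝ) * h ≤ x)
    (h2 : x < ν * h + h / 2) : ⌊x / h + 1 / 2⌋ = ν := by
  rw [Int.floor_eq_iff]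
  constructor
  · have : (ν:ℝ) ≤ x / h := (le_div_iff₀ hh).mpr (by linarith)
    linarith
  · have : x / h < (ν:ℝ) + 1/2 := (div_lt_iff₀ hh).mpr (by nlinarith)
    push_cast; linarith

lemma floor2 {h x : ℝ} (hh : 0 < h) {ν : ℤ} (h1 : (ν:ℝ) * h + h / 2 ≤ x)
    (h2 : x ≤ ν * h + h) : ⌊x / h + 1 / 2⌋ = ν + 1 := by
  rw [Int.floor_eq_iff]
  constructor
  · have : (ν:ℝ) + 1/2 ≤ x / h := (le_div_iff₀ hh).mpr (by nlinarith)
    push_cast; linarith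
  · have : x / h ≤ (ν:ℝ) + 1 := (div_le_iff₀ hh).mpr (by nlinarith)
    push_cast; linarith

lemma recon_neg (h : ℝ) (v : ℤ → ℝ) (x : ℝ) :
    minmodReconstruction h (fun i => -v i) x = - minmodReconstruction h v x := by
  simp only [minmodReconstruction]
  rw [show (-v (⌊x/h+1/2⌋+1)) - (-v ⌊x/h+1/2⌋) = -(v (⌊x/h+1/2⌋+1) - v ⌊x/h+1/2⌋) by ring,
      show (-v ⌊x/h+1/2⌋) - (-v (⌊x/h+1/2⌋-1)) = -(v ⌊x/h+1/2⌋ - v (⌊x/h+1/2⌋-1)) by ring,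
      minmod_neg]
  ring

lemma mono_cell {h : ℝ} (hh : 0 < h) (v : ℤ → ℝ) (ν : ℤ)
    (hd : 0 ≤ v (ν + 1) - v ν) :
    MonotoneOn (minmodReconstruction h v) (Set.Icc ((ν:ℝ) * h) ((ν:ℝ) * h + h)) := by
  set d : ℝ := v (ν + 1) - v ν with hd_def
  set m₀ : ℝ := minmod (v (ν + 1) - v ν) (v ν - v (ν - 1)) with hm0_def
  set m₁ : ℝ := minmod (v (ν + 1 + 1) - v (ν + 1)) (v (ν + 1) - v (ν + 1 - 1)) with hm1_def
  have hm00 : 0 ≤ m₀ := minmod_nonneg_left hd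
  have hm01 : m₀ ≤ d := minmod_le_left hd
  have hsimp : v (ν + 1) - v (ν + 1 - 1) = d := by
    rw [hd_def]; congr 2; ring_nf
  have hm10 : 0 ≤ m₁ := by rw [hm1_def, hsimp]; exact minmod_nonneg_right hd
  have hm11 : m₁ ≤ d := by rw [hm1_def, hsimp]; exact minmod_le_right hd
  intro x hx y hy hxy
  obtain ⟨hx1, hx2⟩ := hx
  obtain ⟨hy1, hy2⟩ := hy
  by_cases hxm : x < (ν:ℝ) * h + h / 2
  · by_cases hym : y < (ν:ℝ) * h + h / 2
    · rw [P_eq h v (floor1 hh hx1 hxm), P_eq h v (floor1 hh hy1 hym), ← hm0_def]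
      have h1 : m₀ * (x - ν * h) ≤ m₀ * (y - ν * h) := by nlinarith
      have := (div_le_div_iff_of_pos_right hh).mpr h1
      linarith
    · push_neg at hym
      rw [P_eq h v (floor1 hh hx1 hxm), P_eq h v (floor2 hh hym hy2), ← hm0_def, ← hm1_def]
      have tx : (x - ν * h) / h ≤ 1 / 2 := by rw [div_le_iff₀ hh]; linarith
      have tx0 : 0 ≤ (x - ν * h) / h := div_nonneg (by linarith) hh.le
      have ty : -(1/2) ≤ (y - ((ν:ℝ) + 1) * h) / h := by rw [le_div_iff₀ hh]; nlinarith
      have ty1 : (y - ((ν:ℝ) + 1) * h) / h ≤ 0 := by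
        apply div_nonpos_of_nonpos_of_nonneg _ hh.le; nlinarith
      push_cast
      rw [mul_div_assoc, mul_div_assoc]
      nlinarith [mul_le_mul_of_nonneg_left tx hm00,
        mul_le_mul_of_nonneg_left ty hm10]
  · push_neg at hxm
    have hym : (ν:ℝ) * h + h / 2 ≤ y := le_trans hxm hxy
    rw [P_eq h v (floor2 hh hxm hx2), P_eq h v (floor2 hh hym hy2), ← hm1_def]
    push_cast
    have h1 : m₁ * (x - ((ν:ℝ)+1) * h) ≤ m₁ * (y - ((ν:ℝ)+1) * h) := by nlinarith
    have := (div_le_div_iff_of_pos_right hh).mpr h1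
    linarith

lemma P_left {h : ℝ} (hh : 0 < h) (v : ℤ → ℝ) (ν : ℤ) :
    minmodReconstruction h v ((ν:ℝ) * h) = v ν := by
  rw [P_eq h v (floor1 hh le_rfl (by linarith))]
  simp

lemma P_right {h : ℝ} (hh : 0 < h) (v : ℤ → ℝ) (ν : ℤ) :
    minmodReconstruction h v ((ν:ℝ) * h + h) = v (ν + 1) := by
  rw [P_eq h v (floor2 hh (by linarith) le_rfl)]
  have : (ν:ℝ) * h + h - ((ν + 1 : ℤ):ℝ) * h = 0 := by push_cast; ring
  rw [this]
  simp

lemma cell_var_mono {h : ℝ} (hh : 0 < h) (v : ℤ → ℝ) (ν : ℤ)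
    (hd : 0 ≤ v (ν + 1) - v ν) :
    eVariationOn (minmodReconstruction h v) (Set.Icc ((ν:ℝ) * h) ((ν:ℝ) * h + h))
      ≤ ENNReal.ofReal |v (ν + 1) - v ν| := by
  have hmem1 : (ν:ℝ) * h ∈ Set.Icc ((ν:ℝ) * h) ((ν:ℝ) * h + h) := ⟨le_rfl, by linarith⟩
  have hmem2 : (ν:ℝ) * h + h ∈ Set.Icc ((ν:ℝ) * h) ((ν:ℝ) * h + h) := ⟨by linarith, le_rfl⟩
  have := (mono_cell hh v ν hd).eVariationOn_le hmem1 hmem2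
  rw [Set.inter_self] at this
  calc eVariationOn (minmodReconstruction h v) (Set.Icc ((ν:ℝ) * h) ((ν:ℝ) * h + h))
      ≤ ENNReal.ofReal
          (minmodReconstruction h v ((ν:ℝ) * h + h) - minmodReconstruction h v ((ν:ℝ) * h)) :=
        this
    _ = ENNReal.ofReal |v (ν + 1) - v ν| := by
        rw [P_left hh v ν, P_right hh v ν, abs_of_nonneg hd]

lemma cell_var {h : ℝ} (hh : 0 < h) (v : ℤ → ℝ) (ν : ℤ) :
    eVariationOn (minmodReconstruction h v) (Set.Icc ((ν:ℝ) * h) ((ν:ℝ) * h + h))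
      ≤ ENNReal.ofReal |v (ν + 1) - v ν| := by
  rcases le_total 0 (v (ν + 1) - v ν) with hd|hd
  · exact cell_var_mono hh v ν hd
  · have key : eVariationOn (minmodReconstruction h v)
        (Set.Icc ((ν:ℝ) * h) ((ν:ℝ) * h + h))
        = eVariationOn (minmodReconstruction h (fun i => -v i))
        (Set.Icc ((ν:ℝ) * h) ((ν:ℝ) * h + h)) := by
      rw [← evar_neg (minmodReconstruction h v)]
      apply eVariationOn.eq_of_eqOn
      intro x _
      rw [recon_neg]
    rw [key]
    have hd' : 0 ≤ (fun i => -v i) (ν + 1) - (fun i => -v i) ν := by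
      simp only; linarith
    refine le_trans (cell_var_mono hh (fun i => -v i) ν hd') (le_of_eq ?_)
    congr 1
    rw [show (fun i => -v i) (ν + 1) - (fun i => -v i) ν = -(v (ν + 1) - v ν) by
      simp only; ring, abs_neg]

lemma chain {h : ℝ} (hh : 0 < h) (v : ℤ → ℝ) (a : ℤ) :
    ∀ b : ℤ, a ≤ b →
    eVariationOn (minmodReconstruction h v) (Set.Icc ((a:ℝ) * h) ((b:ℝ) * h))
      ≤ ∑ ν ∈ Finset.Ico a b, ENNReal.ofReal |v (ν + 1) - v ν| := by
  refine Int.le_induction ?_ ?_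
  · rw [Set.Icc_self, Finset.Ico_self, Finset.sum_empty]
    exact le_of_eq (eVariationOn.subsingleton _ Set.subsingleton_singleton)
  · intro b hab ih
    have hab' : (a:ℝ) ≤ (b:ℝ) := by exact_mod_cast hab
    have hb1 : (a:ℝ) * h ≤ (b:ℝ) * h := mul_le_mul_of_nonneg_right hab' hh.le
    have hb2 : (b:ℝ) * h ≤ ((b + 1 : ℤ):ℝ) * h := by push_cast; nlinarith
    have key := eVariationOn.Icc_add_Icc (s := Set.univ)
      (minmodReconstruction h v) hb1 hb2 (Set.mem_univ _)
    simp only [Set.univ_inter] at key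
    rw [← key]
    have hsplit : Finset.Ico a (b + 1) = insert b (Finset.Ico a b) := by
      ext i; simp only [Finset.mem_Ico, Finset.mem_insert]; omega
    rw [hsplit, Finset.sum_insert (by simp)]
    rw [add_comm (ENNReal.ofReal _)]
    apply add_le_add ih
    have : ((b + 1 : ℤ):ℝ) * h = (b:ℝ) * h + h := by push_cast; ring
    rw [this]
    exact cell_var hh v b

end Aux

/-- The minmod piecewise-linear reconstruction is Total Variation Diminishing:
its pointwise total variation over `ℝ` is at most the total variation
`Σ_ν |v̄_{ν+1} − v̄_ν|` of the underlying cell averages. -/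
theorem minmodReconstruction_TVD
    (h : ℝ) (hh : 0 < h) (v : ℤ → ℝ)
    (hV : Summable fun ν : ℤ => |v (ν + 1) - v ν|) :
    eVariationOn (minmodReconstruction h v) Set.univ
      ≤ ENNReal.ofReal (∑' ν : ℤ, |v (ν + 1) - v ν|) := by
  rw [eVariationOn]
  apply iSup_le
  rintro ⟨n, u, hu, -⟩
  set a : ℤ := ⌊u 0 / h⌋ with ha_def
  set b : ℤ := max a ⌈u n / h⌉ with hb_def
  have hab : a ≤ b := le_max_left _ _
  have hA : (a:ℝ) * h ≤ u 0 := by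
    have := Int.floor_le (u 0 / h)
    calc (a:ℝ) * h ≤ (u 0 / h) * h := mul_le_mul_of_nonneg_right this hh.le
      _ = u 0 := div_mul_cancel₀ _ hh.ne'
  have hB : u n ≤ (b:ℝ) * h := by
    have h1 : u n / h ≤ ((⌈u n / h⌉ : ℤ):ℝ) := Int.le_ceil _
    have h2 : ((⌈u n / h⌉ : ℤ):ℝ) ≤ (b:ℝ) := by exact_mod_cast le_max_right a _
    calc u n = (u n / h) * h := (div_mul_cancel₀ _ hh.ne').symm
      _ ≤ (b:ℝ) * h := mul_le_mul_of_nonneg_right (h1.trans h2) hh.le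
  set u' : ℕ → ℝ := fun i => u (min i n) with hu'_def
  have hu' : Monotone u' := hu.comp (monotone_id.min monotone_const)
  have hmem : ∀ i, u' i ∈ Set.Icc ((a:ℝ) * h) ((b:ℝ) * h) := by
    intro i
    exact ⟨hA.trans (hu (Nat.zero_le _)), (hu (min_le_right i n)).trans hB⟩
  have hsum : ∑ i ∈ Finset.range n,
      edist (minmodReconstruction h v (u (i + 1))) (minmodReconstruction h v (u i))
      = ∑ i ∈ Finset.range n,
      edist (minmodReconstruction h v (u' (i + 1))) (minmodReconstruction h v (u' i)) := by
    refine Finset.sum_congr rfl fun i hi => ?_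
    rw [Finset.mem_range] at hi
    rw [hu'_def]
    simp only
    rw [min_eq_left hi, min_eq_left hi.le]
  calc ∑ i ∈ Finset.range n,
      edist (minmodReconstruction h v (u (i + 1))) (minmodReconstruction h v (u i))
      = ∑ i ∈ Finset.range n,
        edist (minmodReconstruction h v (u' (i + 1))) (minmodReconstruction h v (u' i)) := hsum
    _ ≤ eVariationOn (minmodReconstruction h v) (Set.Icc ((a:ℝ) * h) ((b:ℝ) * h)) :=
        eVariationOn.sum_le (n := n) hu' hmem
    _ ≤ ∑ ν ∈ Finset.Ico a b, ENNReal.ofReal |v (ν + 1) - v ν| := chain hh v a b hab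
    _ = ENNReal.ofReal (∑ ν ∈ Finset.Ico a b, |v (ν + 1) - v ν|) :=
        (ENNReal.ofReal_sum_of_nonneg (fun _ _ => abs_nonneg _)).symm
    _ ≤ ENNReal.ofReal (∑' ν : ℤ, |v (ν + 1) - v ν|) :=
        ENNReal.ofReal_le_ofReal (hV.sum_le_tsum _ (fun _ _ => abs_nonneg _))
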